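/- Commutation of quantum adjoint action with diagonal automorphisms: let τ be an automorphism of R with τ|_C = id, u ∈ R with τ(u) = q^m u and u_ε central in R_ε, θ = (τ^l - id)/(q-ε), m̄ = ml ε^{-1}, and D_u the quantum adjoint derivation of u. Then (a) θ(u_ε) = m̄ u_ε, (b) τ ∘ D_u = ε^m · D_u ∘ τ on R_ε, and (c) θ ∘ D_u = D_u ∘ (θ + m̄) on R_ε. -/

import Mathlib

lemma units_pow_sub_pow_key {C : Type*} [CommRing C] (q eps : Cˣ) (n : ℤ) :
    ∃ s t : C, ((q ^ n : Cˣ) : C) - ((eps ^ n : Cˣ) : C) = ((q : C) - (eps : C)) * s ∧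
      s = (n : C) * ((eps ^ (n - 1) : Cˣ) : C) + ((q : C) - (eps : C)) * t := by
  induction n using Int.induction_on with
  | zero => exact ⟨0, 0, by simp, by simp⟩
  | succ n ih =>
    obtain ⟨s, t, h1, h2⟩ := ih
    have hq1 : ((q ^ ((n : ℤ) + 1) : Cˣ) : C) = ((q ^ (n : ℤ) : Cˣ) : C) * (q : C) := by
      rw [zpow_add_one, Units.val_mul]
    have he1 : ((eps ^ ((n : ℤ) + 1) : Cˣ) : C) = ((eps ^ (n : ℤ) : Cˣ) : C) * (eps : C) := by
      rw [zpow_add_one, Units.val_mul]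
    have hEn : ((eps ^ (n : ℤ) : Cˣ) : C) = ((eps ^ ((n : ℤ) - 1) : Cˣ) : C) * (eps : C) := by
      nth_rewrite 1 [show (n : ℤ) = ((n : ℤ) - 1) + 1 by ring]
      rw [zpow_add_one, Units.val_mul]
    refine ⟨(q : C) * s + ((eps ^ (n : ℤ) : Cˣ) : C),
      (n : C) * ((eps ^ ((n : ℤ) - 1) : Cˣ) : C) + (q : C) * t, ?_, ?_⟩
    · rw [hq1, he1]
      linear_combination (q : C) * h1
    · rw [show ((n : ℤ) + 1) - 1 = (n : ℤ) by ring]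
      push_cast
      push_cast at h2
      linear_combination (q : C) * h2 - (n : C) * hEn
  | pred n ih =>
    obtain ⟨s, t, h1, h2⟩ := ih
    set k : ℤ := -(n : ℤ) with hk
    have hq1 : ((q ^ (k - 1) : Cˣ) : C) = ((q ^ k : Cˣ) : C) * ((q⁻¹ : Cˣ) : C) := by
      rw [zpow_sub_one, Units.val_mul]
    have he1 : ((eps ^ (k - 1) : Cˣ) : C) = ((eps ^ k : Cˣ) : C) * ((eps⁻¹ : Cˣ) : C) := by
      rw [zpow_sub_one, Units.val_mul]
    have he2 : ((eps ^ (k - 1 - 1) : Cˣ) : C) = ((eps ^ (k - 1) : Cˣ) : C) * ((eps⁻¹ : Cˣ) : C) := by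
      rw [zpow_sub_one, Units.val_mul]
    have hqi : ((q⁻¹ : Cˣ) : C) * (q : C) = 1 := by
      rw [← Units.val_mul, inv_mul_cancel, Units.val_one]
    have hei : ((eps⁻¹ : Cˣ) : C) * (eps : C) = 1 := by
      rw [← Units.val_mul, inv_mul_cancel, Units.val_one]
    set Q := (q : C)
    set E := (eps : C)
    set qi := ((q⁻¹ : Cˣ) : C)
    set ei := ((eps⁻¹ : Cˣ) : C)
    set qk := ((q ^ k : Cˣ) : C)
    set B := ((eps ^ k : Cˣ) : C)
    set A := ((eps ^ (k - 1) : Cˣ) : C)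
    have hqi' : qi = ei - (Q - E) * (qi * ei) := by linear_combination ei * hqi - qi * hei
    refine ⟨qi * s - qi * ei * B, qi * t - (k : C) * (qi * ei * A) + qi * (ei * (ei * B)), ?_, ?_⟩
    · rw [hq1, he1]
      linear_combination qi * h1 + B * hqi'
    · rw [he2]
      push_cast
      linear_combination qi * h2 + ((k : C) * A - ei * B) * hqi' + ei * he1

/-- Commutation of the quantum adjoint action with diagonal automorphisms:
if `τ(u) = q^m u`, `u_ε` is central, `θ = (τ^l - id)/(q-ε)` and `m̄ = m l ε^{-1}`, then
(a) `θ(u_ε) = m̄ u_ε`, (b) `τ ∘ D_u = ε^m · D_u ∘ τ`, (c) `θ ∘ D_u = D_u ∘ (θ + m̄)`. -/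
theorem quantum_adjoint_commutation_with_diagonal
    {C R Rε : Type*} [CommRing C] [IsDomain C] [Ring R] [Ring Rε]
    [Algebra C R] [Algebra C Rε] [Module.Free C R]
    (q eps : Cˣ) (l : ℕ) (hl : 0 < l) (hprim : IsPrimitiveRoot (eps : C) l)
    (m : ℤ)
    (τ : R →+* R)
    (hτC : ∀ c : C, τ (algebraMap C R c) = algebraMap C R c)
    (π : R →+* Rε) (hπsurj : Function.Surjective π)
    (hπC : ∀ c : C, π (algebraMap C R c) = algebraMap C Rε c)
    (hπker : ∀ r : R, π r = 0 ↔ ∃ w : R, r = algebraMap C R ((q : C) - (eps : C)) * w)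
    (hreg : ∀ r : R, algebraMap C R ((q : C) - (eps : C)) * r = 0 → r = 0)
    (u : R) (hu : τ u = algebraMap C R ((q ^ m : Cˣ) : C) * u)
    (hucentral : ∀ x : Rε, Commute (π u) x)
    -- τ^l ≡ id mod (q-ε) and the divided-difference derivation θ:
    (Θ : R → R)
    (hΘ : ∀ a : R, (⇑τ)^[l] a - a = algebraMap C R ((q : C) - (eps : C)) * Θ a)
    (θ : Rε → Rε) (hθ : ∀ a : R, θ (π a) = π (Θ a))
    -- the induced automorphism of R_ε:
    (τε : Rε →+* Rε) (hτε : ∀ a : R, τε (π a) = π (τ a))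
    -- the quantum adjoint derivation of u:
    (D : Rε → Rε)
    (hD : ∀ a w : R, u * a - a * u = algebraMap C R ((q : C) - (eps : C)) * w →
      D (π a) = π w)
    -- m̄ = m l ε^{-1}:
    (mbar : C) (hmbar : mbar = (((m * (l : ℤ) : ℤ) : C)) * ((eps⁻¹ : Cˣ) : C)) :
    -- (a)
    θ (π u) = algebraMap C Rε mbar * π u ∧
    -- (b)
    (∀ x : Rε, τε (D x) = algebraMap C Rε ((eps ^ m : Cˣ) : C) * D (τε x)) ∧
    -- (c)
    (∀ x : Rε, θ (D x) = D (θ x + algebraMap C Rε mbar * x)) := by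
  set dC : C := (q : C) - (eps : C) with hdC
  -- helpers
  have cancel : ∀ x y : R, dC • x = dC • y → x = y := by
    intro x y h
    have h0 : algebraMap C R dC * (x - y) = 0 := by
      rw [mul_sub, ← Algebra.smul_def, ← Algebra.smul_def, h, sub_self]
    exact sub_eq_zero.mp (hreg _ h0)
  have hπs : ∀ (c : C) (r : R), π (c • r) = c • π r := by
    intro c r; rw [Algebra.smul_def, map_mul, hπC, ← Algebra.smul_def]
  have hτs : ∀ (c : C) (r : R), τ (c • r) = c • τ r := by
    intro c r; rw [Algebra.smul_def, map_mul, hτC, ← Algebra.smul_def]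
  have czs : ∀ (t : C) (x : Rε), (dC * t) • x = 0 := by
    intro t x
    rw [Algebra.smul_def]
    have h0 : algebraMap C Rε (dC * t) = 0 := by
      rw [← hπC, (hπker _).2 ⟨algebraMap C R t, by rw [map_mul]⟩]
    rw [h0, zero_mul]
  have hus : τ u = ((q ^ m : Cˣ) : C) • u := by rw [hu, Algebra.smul_def]
  have hDs : ∀ a w : R, u * a - a * u = dC • w → D (π a) = π w := by
    intro a w h; exact hD a w (by rw [h, Algebra.smul_def])
  have hΘs : ∀ a : R, (⇑τ)^[l] a = a + dC • Θ a := by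
    intro a
    rw [Algebra.smul_def, add_comm]
    exact sub_eq_iff_eq_add.mp (hΘ a)
  have hql : ∀ k : ℕ, (⇑τ)^[k] u = ((q ^ (m * (k : ℤ)) : Cˣ) : C) • u := by
    intro k
    induction k with
    | zero => simp
    | succ k ih =>
      rw [Function.iterate_succ_apply', ih, hτs, hus, smul_smul]
      congr 1
      rw [← Units.val_mul, ← zpow_add]
      congr 2
      push_cast
      ring
  -- root of unity facts
  have hepsl : eps ^ ((l : ℕ) : ℤ) = 1 := by
    rw [zpow_natCast]
    exact Units.ext (by simpa using hprim.pow_eq_one)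
  have hepsml : eps ^ (m * (l : ℤ)) = 1 := by
    rw [mul_comm, zpow_mul, hepsl, one_zpow]
  have hepsmli : eps ^ (-(m * (l : ℤ))) = 1 := by
    rw [zpow_neg, hepsml, inv_one]
  -- part (a)
  obtain ⟨s, t, h1, h2⟩ := units_pow_sub_pow_key q eps (m * (l : ℤ))
  rw [hepsml, Units.val_one] at h1
  rw [show ((eps ^ (m * (l : ℤ) - 1) : Cˣ) : C) = ((eps⁻¹ : Cˣ) : C) by
    rw [zpow_sub_one, hepsml, one_mul]] at h2
  have hsmb : s = mbar + dC * t := by rw [hmbar]; exact h2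
  have hΘu : Θ u = s • u := by
    apply cancel
    have e := hΘs u
    rw [hql l] at e
    have h3 : dC • Θ u = ((q ^ (m * (l : ℤ)) : Cˣ) : C) • u - u := by rw [e]; abel
    rw [h3, smul_smul, ← h1, sub_smul, one_smul]
  have parta : θ (π u) = algebraMap C Rε mbar * π u := by
    rw [hθ u, hΘu, hπs, hsmb, add_smul, czs, add_zero, Algebra.smul_def]
  refine ⟨parta, ?_, ?_⟩
  -- part (b)
  · intro x
    obtain ⟨a, rfl⟩ := hπsurj x
    have hc : π (u * a - a * u) = 0 := by
      rw [map_sub, map_mul, map_mul, (hucentral (π a)).eq, sub_self]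
    obtain ⟨w, hw0⟩ := (hπker _).1 hc
    have hw : u * a - a * u = dC • w := by rw [hw0, Algebra.smul_def]
    have hDa : D (π a) = π w := hDs a w hw
    obtain ⟨s1, t1, hb1, hb2⟩ := units_pow_sub_pow_key q eps m
    have hqq : (((q ^ m)⁻¹ : Cˣ) : C) * ((q ^ m : Cˣ) : C) = 1 := by
      rw [← Units.val_mul, inv_mul_cancel, Units.val_one]
    have hτw : u * τ a - τ a * u = dC • ((((q ^ m)⁻¹ : Cˣ) : C) • τ w) := by
      have e1 : ((q ^ m : Cˣ) : C) • (u * τ a - τ a * u) = dC • τ w := by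
        have e0 := congrArg (⇑τ) hw
        rw [map_sub, map_mul, map_mul, hus, hτs] at e0
        rw [smul_mul_assoc, mul_smul_comm, ← smul_sub] at e0
        exact e0
      have e2 : ((((q ^ m)⁻¹ : Cˣ) : C) * ((q ^ m : Cˣ) : C)) • (u * τ a - τ a * u)
          = (((q ^ m)⁻¹ : Cˣ) : C) • (dC • τ w) := by rw [← smul_smul, e1]
      rw [hqq, one_smul] at e2
      rw [e2, smul_smul, smul_smul, mul_comm]
    have hDτa : D (π (τ a)) = π ((((q ^ m)⁻¹ : Cˣ) : C) • τ w) := hDs _ _ hτw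
    rw [hDa, hτε, hτε, hDτa, hπs, ← Algebra.smul_def, smul_smul]
    have hone : ((eps ^ m : Cˣ) : C) * (((q ^ m)⁻¹ : Cˣ) : C)
        = 1 + dC * (-(((q ^ m)⁻¹ : Cˣ) : C) * s1) := by
      linear_combination (-(((q ^ m)⁻¹ : Cˣ) : C)) * hb1 + hqq
    rw [hone, add_smul, one_smul, czs, add_zero]
  -- part (c)
  · intro x
    obtain ⟨a, rfl⟩ := hπsurj x
    have hc : π (u * a - a * u) = 0 := by
      rw [map_sub, map_mul, map_mul, (hucentral (π a)).eq, sub_self]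
    obtain ⟨w, hw0⟩ := (hπker _).1 hc
    have hw : u * a - a * u = dC • w := by rw [hw0, Algebra.smul_def]
    have hDa : D (π a) = π w := hDs a w hw
    obtain ⟨s2, t2, hc1, hc2⟩ := units_pow_sub_pow_key q eps (-(m * (l : ℤ)))
    rw [hepsmli, Units.val_one] at hc1
    rw [show ((eps ^ (-(m * (l : ℤ)) - 1) : Cˣ) : C) = ((eps⁻¹ : Cˣ) : C) by
      rw [zpow_sub_one, hepsmli, one_mul]] at hc2
    have hs2mb : s2 = -mbar + dC * t2 := by rw [hc2, hmbar]; push_cast; ring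
    have hq' : ((q ^ (-(m * (l : ℤ))) : Cˣ) : C) = 1 + dC * s2 := by linear_combination hc1
    have hqml1 : ((q ^ (-(m * (l : ℤ))) : Cˣ) : C) * ((q ^ (m * (l : ℤ)) : Cˣ) : C) = 1 := by
      rw [← Units.val_mul, ← zpow_add]
      norm_num
    -- the ring hom τ^l
    set T : R →+* R := τ ^ l with hT
    have hTco : ∀ x : R, T x = (⇑τ)^[l] x := fun x => by rw [hT, RingHom.coe_pow]
    have hTC : ∀ c : C, T (algebraMap C R c) = algebraMap C R c := fun c => by
      rw [hTco]; exact Function.iterate_fixed (hτC c) l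
    have hTsm : ∀ (c : C) (r : R), T (c • r) = c • T r := by
      intro c r; rw [Algebra.smul_def, map_mul, hTC, ← Algebra.smul_def]
    have h6 := congrArg (⇑T) hw
    rw [map_sub, map_mul, map_mul, hTsm] at h6
    rw [show T u = ((q ^ (m * (l : ℤ)) : Cˣ) : C) • u from by rw [hTco]; exact hql l,
      show T a = a + dC • Θ a from by rw [hTco]; exact hΘs a,
      show T w = w + dC • Θ w from by rw [hTco]; exact hΘs w] at h6
    have E2 : ((q ^ (m * (l : ℤ)) : Cˣ) : C) • (w + (u * Θ a - Θ a * u)) = w + dC • Θ w := by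
      apply cancel
      rw [← h6]
      have expand : (((q ^ (m * (l : ℤ)) : Cˣ) : C) • u) * (a + dC • Θ a)
          - (a + dC • Θ a) * (((q ^ (m * (l : ℤ)) : Cˣ) : C) • u)
          = ((q ^ (m * (l : ℤ)) : Cˣ) : C) • ((u * a - a * u) + dC • (u * Θ a - Θ a * u)) := by
        simp only [mul_add, add_mul, smul_mul_assoc, mul_smul_comm, smul_add, smul_sub, smul_smul]
        module
      rw [expand, hw]
      module
    have E3 : u * Θ a - Θ a * u
        = dC • (s2 • w + ((q ^ (-(m * (l : ℤ))) : Cˣ) : C) • Θ w) := by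
      have h7 : (((q ^ (-(m * (l : ℤ))) : Cˣ) : C) * ((q ^ (m * (l : ℤ)) : Cˣ) : C))
          • (w + (u * Θ a - Θ a * u))
          = ((q ^ (-(m * (l : ℤ))) : Cˣ) : C) • (w + dC • Θ w) := by rw [← smul_smul, E2]
      rw [hqml1, one_smul] at h7
      have h8 : u * Θ a - Θ a * u = ((q ^ (-(m * (l : ℤ))) : Cˣ) : C) • (w + dC • Θ w) - w := by
        rw [← h7]; abel
      rw [h8, hq']
      match_scalars <;> ring
    have hb : u * (Θ a + mbar • a) - (Θ a + mbar • a) * u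
        = dC • (s2 • w + ((q ^ (-(m * (l : ℤ))) : Cˣ) : C) • Θ w + mbar • w) := by
      have expand2 : u * (Θ a + mbar • a) - (Θ a + mbar • a) * u
          = (u * Θ a - Θ a * u) + mbar • (u * a - a * u) := by
        simp only [mul_add, add_mul, mul_smul_comm, smul_mul_assoc, smul_sub]
        abel
      rw [expand2, E3, hw]
      module
    have hDb := hDs _ _ hb
    have harg : π (Θ a) + algebraMap C Rε mbar * π a = π (Θ a + mbar • a) := by
      rw [map_add, hπs, Algebra.smul_def]
    rw [hDa, hθ w, hθ a, harg, hDb]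
    rw [map_add, map_add, hπs, hπs, hπs, hq', hs2mb]
    simp only [add_smul, one_smul, neg_smul, czs, add_zero, zero_add]
    abel
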